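/- arXiv:2106.11110 — 2 statements merged into one kernel-verified Lean document; each statement's English description precedes it below -/
import Mathlib

section
/- Let λ>0 and let f:ℝ₊×ℝ₊*×ℝ→ℝ₊ be bounded measurable with f ≥ σ > 0 for a ≥ Δ. For every ε>0 define θ := 1 − (1−e^{-λε}) e^{−‖f‖_∞ ε} ∈ (0,1). Then for all m>0 and x∈ℝ: ∫₀^∞ e^{-λa} f(a, e^{-λa}m, x) exp(−∫₀^a f(s, e^{-λs}m, x) ds) da ≤ θ < 1. -/
open MeasureTheory

lemma survival_identity (g : ℝ → ℝ) (M : ℝ) (hmeas : Measurable g)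
    (h0 : ∀ s, 0 ≤ g s) (hle : ∀ s, g s ≤ M) (b : ℝ) (hb : 0 ≤ b) :
    ∫ s in Set.Ioc 0 b, g s * Real.exp (-(∫ t in (0:ℝ)..s, g t))
      = 1 - Real.exp (-(∫ t in (0:ℝ)..b, g t)) := by
  have hM : 0 ≤ M := le_trans (h0 0) (hle 0)
  set F : ℝ → ℝ := fun u => ∫ t in (0:ℝ)..u, g t with hF
  have hgint : ∀ a b : ℝ, IntervalIntegrable g volume a b := by
    intro a b
    constructor <;>
    · apply Measure.integrableOn_of_bounded (measure_Ioc_lt_top.ne) hmeas.aestronglyMeasurable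
      filter_upwards with s
      rw [Real.norm_eq_abs, abs_of_nonneg (h0 s)]; exact hle s
  have hFcont : Continuous F := intervalIntegral.continuous_primitive hgint 0
  have hFsub : ∀ a b : ℝ, F b - F a = ∫ t in a..b, g t := by
    intro a b
    exact intervalIntegral.integral_interval_sub_left (hgint 0 b) (hgint 0 a)
  have hFmono : ∀ a b : ℝ, a ≤ b → F a ≤ F b := by
    intro a b hab
    have h := hFsub a b
    have : 0 ≤ ∫ t in a..b, g t := intervalIntegral.integral_nonneg hab fun s _ => h0 s
    linarith
  have hFlip : ∀ a b : ℝ, a ≤ b → F b - F a ≤ M * (b - a) := by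
    intro a b hab
    rw [hFsub]
    calc ∫ t in a..b, g t ≤ ∫ _t in a..b, M :=
          intervalIntegral.integral_mono_on hab (hgint a b) intervalIntegrable_const
            (fun s _ => hle s)
      _ = M * (b - a) := by simp [intervalIntegral.integral_const, smul_eq_mul, mul_comm]
  have hF0 : F 0 = 0 := by simp [hF]
  have hFnn : ∀ a : ℝ, 0 ≤ a → 0 ≤ F a := fun a ha => hF0 ▸ hFmono 0 a ha
  have hGim : ∀ a b : ℝ, IntervalIntegrable (fun s => g s * Real.exp (-F s)) volume a b := by
    intro a b
    exact (hgint a b).mul_continuousOn ((Real.continuous_exp.comp hFcont.neg).continuousOn)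
  -- per-interval estimate
  have est : ∀ a b : ℝ, 0 ≤ a → a ≤ b →
      |(∫ s in a..b, g s * Real.exp (-F s)) - (Real.exp (-F a) - Real.exp (-F b))|
        ≤ (F b - F a) ^ 2 := by
    intro a b ha hab
    set D := F b - F a with hD
    have hDnn : 0 ≤ D := by have := hFmono a b hab; simp only [hD]; linarith
    have hIub : (∫ s in a..b, g s * Real.exp (-F s)) ≤ D * Real.exp (-F a) := by
      calc (∫ s in a..b, g s * Real.exp (-F s)) ≤ ∫ s in a..b, g s * Real.exp (-F a) := by
            apply intervalIntegral.integral_mono_on hab (hGim a b)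
              ((hgint a b).mul_const _)
            intro s hs
            have h1 : F a ≤ F s := hFmono a s hs.1
            exact mul_le_mul_of_nonneg_left (Real.exp_le_exp.2 (by linarith)) (h0 s)
        _ = D * Real.exp (-F a) := by
            rw [intervalIntegral.integral_mul_const, hD, hFsub]
    have hIlb : D * Real.exp (-F b) ≤ ∫ s in a..b, g s * Real.exp (-F s) := by
      calc D * Real.exp (-F b) = ∫ s in a..b, g s * Real.exp (-F b) := by
            rw [intervalIntegral.integral_mul_const, hD, hFsub]
        _ ≤ ∫ s in a..b, g s * Real.exp (-F s) := by
            apply intervalIntegral.integral_mono_on hab ((hgint a b).mul_const _) (hGim a b)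
            intro s hs
            have h1 : F s ≤ F b := hFmono s b hs.2
            exact mul_le_mul_of_nonneg_left (Real.exp_le_exp.2 (by linarith)) (h0 s)
    have hexp : Real.exp (-F b) = Real.exp (-F a) * Real.exp (-D) := by
      rw [← Real.exp_add, hD]; ring_nf
    have h1 : 1 - Real.exp (-D) ≤ D := by
      have := Real.add_one_le_exp (-D); linarith
    have h2 : D * Real.exp (-D) ≤ 1 - Real.exp (-D) := by
      have h3 := Real.add_one_le_exp D
      have h4 : Real.exp D * Real.exp (-D) = 1 := by rw [← Real.exp_add]; simp
      nlinarith [Real.exp_pos (-D)]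
    have hEub : Real.exp (-F a) - Real.exp (-F b) ≤ D * Real.exp (-F a) := by
      rw [hexp]
      have := Real.exp_pos (-F a)
      nlinarith
    have hElb : D * Real.exp (-F b) ≤ Real.exp (-F a) - Real.exp (-F b) := by
      rw [hexp]
      have := Real.exp_pos (-F a)
      nlinarith
    have hea : Real.exp (-F a) ≤ 1 := Real.exp_le_one_iff.2 (by linarith [hFnn a ha])
    have hgap : D * Real.exp (-F a) - D * Real.exp (-F b) ≤ D ^ 2 := by
      rw [hexp]
      have := Real.exp_pos (-D)
      nlinarith
    rw [abs_sub_le_iff]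
    constructor <;> linarith
  -- telescoping
  rcases hb.eq_or_lt with hb0 | hb0
  · rw [← hb0]; simp [hF0]
  have key : ∀ n : ℕ, 0 < n →
      |(∫ s in (0:ℝ)..b, g s * Real.exp (-F s)) - (1 - Real.exp (-F b))|
        ≤ M ^ 2 * b ^ 2 / n := by
    intro n hn
    have hnR : (0:ℝ) < n := Nat.cast_pos.2 hn
    set t : ℕ → ℝ := fun i => i * (b / n) with ht
    have hbn : 0 ≤ b / n := by positivity
    have htn : t n = b := by show (n:ℝ) * (b / n) = b; field_simp [hnR.ne']
    have ht0 : t 0 = 0 := by simp [ht]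
    have htm : ∀ i j : ℕ, i ≤ j → t i ≤ t j := by
      intro i j hij
      exact mul_le_mul_of_nonneg_right (Nat.cast_le.2 hij) hbn
    have htsucc : ∀ i : ℕ, t (i + 1) - t i = b / n := by
      intro i; simp only [ht]; push_cast; ring
    have ht0le : ∀ i : ℕ, 0 ≤ t i := fun i => ht0 ▸ htm 0 i (Nat.zero_le i)
    have hsum1 : ∑ i ∈ Finset.range n, ∫ s in t i..t (i + 1), g s * Real.exp (-F s)
        = ∫ s in (0:ℝ)..b, g s * Real.exp (-F s) := by
      rw [intervalIntegral.sum_integral_adjacent_intervals (fun k _ => hGim _ _), ht0, htn]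
    have hsum2 : ∑ i ∈ Finset.range n, (Real.exp (-F (t i)) - Real.exp (-F (t (i + 1))))
        = 1 - Real.exp (-F b) := by
      rw [Finset.sum_range_sub' (fun i => Real.exp (-F (t i))), ht0, htn, hF0]
      simp
    calc |(∫ s in (0:ℝ)..b, g s * Real.exp (-F s)) - (1 - Real.exp (-F b))|
        = |∑ i ∈ Finset.range n, ((∫ s in t i..t (i + 1), g s * Real.exp (-F s))
            - (Real.exp (-F (t i)) - Real.exp (-F (t (i + 1)))))| := by
          rw [Finset.sum_sub_distrib, hsum1, hsum2]
      _ ≤ ∑ i ∈ Finset.range n, |(∫ s in t i..t (i + 1), g s * Real.exp (-F s))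
            - (Real.exp (-F (t i)) - Real.exp (-F (t (i + 1))))| :=
          Finset.abs_sum_le_sum_abs _ _
      _ ≤ ∑ i ∈ Finset.range n, (F (t (i + 1)) - F (t i)) ^ 2 := by
          apply Finset.sum_le_sum
          intro i _
          exact est (t i) (t (i + 1)) (ht0le i) (htm i (i + 1) (Nat.le_succ i))
      _ ≤ ∑ i ∈ Finset.range n, (M * (b / n)) * (F (t (i + 1)) - F (t i)) := by
          apply Finset.sum_le_sum
          intro i _
          have h1 : 0 ≤ F (t (i + 1)) - F (t i) := by
            have := hFmono (t i) (t (i + 1)) (htm i (i + 1) (Nat.le_succ i)); linarith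
          have h2 : F (t (i + 1)) - F (t i) ≤ M * (b / n) := by
            have := hFlip (t i) (t (i + 1)) (htm i (i + 1) (Nat.le_succ i))
            rw [htsucc i] at this; exact this
          nlinarith
      _ = (M * (b / n)) * ∑ i ∈ Finset.range n, (F (t (i + 1)) - F (t i)) := by
          rw [Finset.mul_sum]
      _ = (M * (b / n)) * F b := by
          rw [Finset.sum_range_sub (fun i => F (t i)), ht0, htn, hF0, sub_zero]
      _ ≤ (M * (b / n)) * (M * b) := by
          have hFb : F b ≤ M * b := by have := hFlip 0 b hb; rw [hF0] at this; linarith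
          have : 0 ≤ M * (b / n) := by positivity
          nlinarith
      _ = M ^ 2 * b ^ 2 / n := by field_simp
  have hzero : (∫ s in (0:ℝ)..b, g s * Real.exp (-F s)) - (1 - Real.exp (-F b)) = 0 := by
    by_contra h
    have hpos : 0 < |(∫ s in (0:ℝ)..b, g s * Real.exp (-F s)) - (1 - Real.exp (-F b))| :=
      abs_pos.2 h
    set X := |(∫ s in (0:ℝ)..b, g s * Real.exp (-F s)) - (1 - Real.exp (-F b))| with hX
    obtain ⟨n, hn⟩ := exists_nat_gt (max 1 (M ^ 2 * b ^ 2 / X))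
    have hn1 : 0 < n := by
      by_contra hc
      push_neg at hc
      interval_cases n
      simp at hn
      linarith [hn.1]
    have hnR : (0:ℝ) < n := Nat.cast_pos.2 hn1
    have h2 : M ^ 2 * b ^ 2 / X < n := lt_of_le_of_lt (le_max_right _ _) hn
    have h3 : M ^ 2 * b ^ 2 / (n:ℝ) < X := by
      rw [div_lt_iff₀ hnR]
      rw [div_lt_iff₀ hpos] at h2
      nlinarith
    have := key n hn1
    linarith
  have hIoc : (∫ s in Set.Ioc 0 b, g s * Real.exp (-F s))
      = ∫ s in (0:ℝ)..b, g s * Real.exp (-F s) :=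
    (intervalIntegral.integral_of_le hb).symm
  rw [hIoc]
  linarith

lemma aux_contraction (lam : ℝ) (hlam : 0 < lam) (g : ℝ → ℝ) (M σ Δ : ℝ)
    (hσ : 0 < σ) (hΔ : 0 ≤ Δ) (hmeas : Measurable g)
    (h0 : ∀ s, 0 ≤ g s) (hle : ∀ s, g s ≤ M) (hfl : ∀ s, Δ ≤ s → σ ≤ g s)
    (ε : ℝ) (hε : 0 < ε) :
    (∫ a in Set.Ioi (0:ℝ),
        Real.exp (-lam * a) * g a * Real.exp (-(∫ s in (0:ℝ)..a, g s)))
      ≤ 1 - (1 - Real.exp (-lam * ε)) * Real.exp (-M * ε) := by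
  have hM : 0 ≤ M := le_trans (h0 0) (hle 0)
  set F : ℝ → ℝ := fun u => ∫ t in (0:ℝ)..u, g t with hF
  have hgint : ∀ a b : ℝ, IntervalIntegrable g volume a b := by
    intro a b
    constructor <;>
    · apply Measure.integrableOn_of_bounded (measure_Ioc_lt_top.ne) hmeas.aestronglyMeasurable
      filter_upwards with s
      rw [Real.norm_eq_abs, abs_of_nonneg (h0 s)]; exact hle s
  have hFcont : Continuous F := intervalIntegral.continuous_primitive hgint 0
  have hFsub : ∀ a b : ℝ, F b - F a = ∫ t in a..b, g t := by
    intro a b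
    exact intervalIntegral.integral_interval_sub_left (hgint 0 b) (hgint 0 a)
  have hFmono : ∀ a b : ℝ, a ≤ b → F a ≤ F b := by
    intro a b hab
    have h := hFsub a b
    have : 0 ≤ ∫ t in a..b, g t := intervalIntegral.integral_nonneg hab fun s _ => h0 s
    linarith
  have hFlip : ∀ a b : ℝ, a ≤ b → F b - F a ≤ M * (b - a) := by
    intro a b hab
    rw [hFsub]
    calc ∫ t in a..b, g t ≤ ∫ _t in a..b, M :=
          intervalIntegral.integral_mono_on hab (hgint a b) intervalIntegrable_const
            (fun s _ => hle s)
      _ = M * (b - a) := by simp [intervalIntegral.integral_const, smul_eq_mul, mul_comm]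
  have hF0 : F 0 = 0 := by simp [hF]
  have hFnn : ∀ a : ℝ, 0 ≤ a → 0 ≤ F a := fun a ha => hF0 ▸ hFmono 0 a ha
  -- lower bound on F for large a
  have hFlow : ∀ a : ℝ, Δ ≤ a → σ * (a - Δ) ≤ F a := by
    intro a ha
    have h1 : σ * (a - Δ) ≤ F a - F Δ := by
      rw [hFsub]
      calc σ * (a - Δ) = ∫ _t in Δ..a, σ := by
            simp [intervalIntegral.integral_const, smul_eq_mul, mul_comm]
        _ ≤ ∫ t in Δ..a, g t :=
            intervalIntegral.integral_mono_on ha intervalIntegrable_const (hgint Δ a)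
              (fun s hs => hfl s hs.1)
    have h2 : 0 ≤ F Δ := hFnn Δ hΔ
    linarith
  have hexpbound : ∀ a : ℝ, 0 ≤ a →
      Real.exp (-F a) ≤ Real.exp (σ * Δ) * Real.exp (-σ * a) := by
    intro a ha
    rw [← Real.exp_add, Real.exp_le_exp]
    rcases le_or_gt Δ a with h | h
    · have := hFlow a h; linarith
    · have := hFnn a ha; nlinarith
  -- measurability of integrands
  have hGmeas : Measurable fun a => g a * Real.exp (-F a) :=
    hmeas.mul (Real.continuous_exp.comp hFcont.neg).measurable
  have hΦmeas : Measurable fun a => Real.exp (-lam * a) * g a * Real.exp (-F a) :=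
    ((Real.continuous_exp.comp (continuous_const.mul continuous_id)).measurable.mul hmeas).mul
      (Real.continuous_exp.comp hFcont.neg).measurable
  -- integrability on Ioi 0
  have hbint : IntegrableOn (fun a => M * Real.exp (σ * Δ) * Real.exp (-σ * a))
      (Set.Ioi (0:ℝ)) := (exp_neg_integrableOn_Ioi 0 hσ).const_mul _
  have hGbound : ∀ a ∈ Set.Ioi (0:ℝ),
      ‖g a * Real.exp (-F a)‖ ≤ M * Real.exp (σ * Δ) * Real.exp (-σ * a) := by
    intro a ha
    have ha' : (0:ℝ) ≤ a := le_of_lt ha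
    rw [Real.norm_eq_abs, abs_of_nonneg (mul_nonneg (h0 a) (Real.exp_pos _).le)]
    have h1 := hexpbound a ha'
    have h2 := hle a
    have h3 := h0 a
    have := Real.exp_pos (-F a)
    nlinarith [Real.exp_pos (σ * Δ), Real.exp_pos (-σ * a)]
  have hGint : IntegrableOn (fun a => g a * Real.exp (-F a)) (Set.Ioi (0:ℝ)) := by
    apply Integrable.mono' hbint hGmeas.aestronglyMeasurable
    rw [ae_restrict_iff' measurableSet_Ioi]
    filter_upwards with a ha using hGbound a ha
  have hΦint : IntegrableOn (fun a => Real.exp (-lam * a) * g a * Real.exp (-F a))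
      (Set.Ioi (0:ℝ)) := by
    apply Integrable.mono' hbint hΦmeas.aestronglyMeasurable
    rw [ae_restrict_iff' measurableSet_Ioi]
    filter_upwards with a ha
    have ha' : (0:ℝ) ≤ a := le_of_lt ha
    have h4 : Real.exp (-lam * a) ≤ 1 := Real.exp_le_one_iff.2 (by nlinarith)
    have h5 := hGbound a ha
    rw [Real.norm_eq_abs, abs_of_nonneg (mul_nonneg (mul_nonneg (Real.exp_pos _).le (h0 a))
      (Real.exp_pos _).le)]
    rw [Real.norm_eq_abs, abs_of_nonneg (mul_nonneg (h0 a) (Real.exp_pos _).le)] at h5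
    have hX0 : 0 ≤ g a * Real.exp (-F a) := mul_nonneg (h0 a) (Real.exp_pos _).le
    calc Real.exp (-lam * a) * g a * Real.exp (-F a)
        ≤ 1 * (g a * Real.exp (-F a)) := by
          rw [mul_assoc]; exact mul_le_mul_of_nonneg_right h4 hX0
      _ ≤ M * Real.exp (σ * Δ) * Real.exp (-σ * a) := by rw [one_mul]; exact h5
  -- the identity
  have hid : ∀ b : ℝ, 0 ≤ b →
      (∫ s in Set.Ioc 0 b, g s * Real.exp (-F s)) = 1 - Real.exp (-F b) := by
    intro b hb
    exact survival_identity g M hmeas h0 hle b hb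
  -- total mass is 1
  have htotal : (∫ a in Set.Ioi (0:ℝ), g a * Real.exp (-F a)) = 1 := by
    have h1 : Filter.Tendsto (fun b => ∫ s in (0:ℝ)..b, g s * Real.exp (-F s))
        Filter.atTop (nhds (∫ a in Set.Ioi (0:ℝ), g a * Real.exp (-F a))) :=
      intervalIntegral_tendsto_integral_Ioi 0 hGint Filter.tendsto_id
    have h2 : (fun b => ∫ s in (0:ℝ)..b, g s * Real.exp (-F s))
        =ᶠ[Filter.atTop] fun b => 1 - Real.exp (-F b) := by
      filter_upwards [Filter.eventually_ge_atTop (0:ℝ)] with b hb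
      rw [intervalIntegral.integral_of_le hb, hid b hb]
    have h3 : Filter.Tendsto F Filter.atTop Filter.atTop := by
      apply Filter.tendsto_atTop_mono' _ _ (Filter.tendsto_atTop_add_const_right
        Filter.atTop (-(σ * Δ)) (Filter.Tendsto.const_mul_atTop hσ Filter.tendsto_id))
      filter_upwards [Filter.eventually_ge_atTop Δ] with b hb
      have := hFlow b hb
      simp only [Filter.tendsto_id, id]
      nlinarith
    have h4 : Filter.Tendsto (fun b => 1 - Real.exp (-F b)) Filter.atTop (nhds 1) := by
      have h5 : Filter.Tendsto (fun b => Real.exp (-F b)) Filter.atTop (nhds 0) :=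
        Real.tendsto_exp_atBot.comp (Filter.tendsto_neg_atBot_iff.2 h3)
      have := Filter.Tendsto.const_sub 1 h5
      simpa using this
    have := h1.congr' h2
    have := tendsto_nhds_unique this h4
    linarith [this]
  -- split the domain
  have hsplit : Set.Ioc (0:ℝ) ε ∪ Set.Ioi ε = Set.Ioi (0:ℝ) :=
    Set.Ioc_union_Ioi_eq_Ioi hε.le
  have hdisj : Disjoint (Set.Ioc (0:ℝ) ε) (Set.Ioi ε) := by
    apply Set.disjoint_left.2
    intro a ha ha'
    exact absurd ha.2 (not_le.2 ha')
  have hIocsub : Set.Ioc (0:ℝ) ε ⊆ Set.Ioi (0:ℝ) := Set.Ioc_subset_Ioi_self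
  have hIoisub : Set.Ioi ε ⊆ Set.Ioi (0:ℝ) := Set.Ioi_subset_Ioi hε.le
  have hGsplit : (∫ a in Set.Ioi (0:ℝ), g a * Real.exp (-F a))
      = (∫ a in Set.Ioc 0 ε, g a * Real.exp (-F a))
        + ∫ a in Set.Ioi ε, g a * Real.exp (-F a) := by
    rw [← setIntegral_union hdisj measurableSet_Ioi (hGint.mono_set hIocsub)
      (hGint.mono_set hIoisub), hsplit]
  have hGtail : (∫ a in Set.Ioi ε, g a * Real.exp (-F a)) = Real.exp (-F ε) := by
    have := hid ε hε.le
    rw [htotal, this] at hGsplit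
    linarith
  have hΦsplit : (∫ a in Set.Ioi (0:ℝ), Real.exp (-lam * a) * g a * Real.exp (-F a))
      = (∫ a in Set.Ioc 0 ε, Real.exp (-lam * a) * g a * Real.exp (-F a))
        + ∫ a in Set.Ioi ε, Real.exp (-lam * a) * g a * Real.exp (-F a) := by
    rw [← setIntegral_union hdisj measurableSet_Ioi (hΦint.mono_set hIocsub)
      (hΦint.mono_set hIoisub), hsplit]
  -- bound on Ioc 0 ε
  have hbound1 : (∫ a in Set.Ioc 0 ε, Real.exp (-lam * a) * g a * Real.exp (-F a))
      ≤ 1 - Real.exp (-F ε) := by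
    rw [← hid ε hε.le]
    apply setIntegral_mono_on (hΦint.mono_set hIocsub) (hGint.mono_set hIocsub)
      measurableSet_Ioc
    intro a ha
    have h4 : Real.exp (-lam * a) ≤ 1 := Real.exp_le_one_iff.2 (by nlinarith [ha.1])
    have hX0 : 0 ≤ g a * Real.exp (-F a) := mul_nonneg (h0 a) (Real.exp_pos _).le
    calc Real.exp (-lam * a) * g a * Real.exp (-F a)
        ≤ 1 * (g a * Real.exp (-F a)) := by
          rw [mul_assoc]; exact mul_le_mul_of_nonneg_right h4 hX0
      _ = g a * Real.exp (-F a) := one_mul _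
  -- bound on Ioi ε
  have hbound2 : (∫ a in Set.Ioi ε, Real.exp (-lam * a) * g a * Real.exp (-F a))
      ≤ Real.exp (-lam * ε) * Real.exp (-F ε) := by
    calc (∫ a in Set.Ioi ε, Real.exp (-lam * a) * g a * Real.exp (-F a))
        ≤ ∫ a in Set.Ioi ε, Real.exp (-lam * ε) * (g a * Real.exp (-F a)) := by
          apply setIntegral_mono_on (hΦint.mono_set hIoisub)
            ((hGint.mono_set hIoisub).const_mul _) measurableSet_Ioi
          intro a ha
          have h4 : Real.exp (-lam * a) ≤ Real.exp (-lam * ε) :=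
            Real.exp_le_exp.2 (by nlinarith [le_of_lt (Set.mem_Ioi.1 ha)])
          have hX0 : 0 ≤ g a * Real.exp (-F a) := mul_nonneg (h0 a) (Real.exp_pos _).le
          rw [mul_assoc]
          exact mul_le_mul_of_nonneg_right h4 hX0
      _ = Real.exp (-lam * ε) * Real.exp (-F ε) := by
          rw [integral_const_mul, hGtail]
  -- combine
  have hFε : F ε ≤ M * ε := by have := hFlip 0 ε hε.le; rw [hF0] at this; linarith
  have hkey : Real.exp (-M * ε) ≤ Real.exp (-F ε) := Real.exp_le_exp.2 (by linarith)
  have hcoef : Real.exp (-lam * ε) ≤ 1 := Real.exp_le_one_iff.2 (by nlinarith)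
  calc (∫ a in Set.Ioi (0:ℝ), Real.exp (-lam * a) * g a * Real.exp (-F a))
      ≤ (1 - Real.exp (-F ε)) + Real.exp (-lam * ε) * Real.exp (-F ε) := by
        rw [hΦsplit]; exact add_le_add hbound1 hbound2
    _ = 1 - (1 - Real.exp (-lam * ε)) * Real.exp (-F ε) := by ring
    _ ≤ 1 - (1 - Real.exp (-lam * ε)) * Real.exp (-M * ε) := by nlinarith

/-- Average contraction of the memory variable at each jump:
∫₀^∞ e^{-λa} f(a, e^{-λa}m, x) exp(−∫₀^a f(s, e^{-λs}m, x) ds) da ≤ θ < 1,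
with θ = 1 − (1−e^{-λε}) e^{−‖f‖_∞ ε}. -/
theorem memory_contraction_bound
    (lam : ℝ) (hlam : 0 < lam)
    (f : ℝ → ℝ → ℝ → ℝ) (Mf σ Δ : ℝ) (hσ : 0 < σ) (hΔ : 0 ≤ Δ) (hMf : 0 ≤ Mf)
    (hfmeas : Measurable fun p : ℝ × ℝ × ℝ => f p.1 p.2.1 p.2.2)
    (hfpos : ∀ a m x, 0 ≤ f a m x ∧ f a m x ≤ Mf)
    (hflow : ∀ a m x, Δ ≤ a → 0 < m → σ ≤ f a m x)
    (ε : ℝ) (hε : 0 < ε)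
    (m x : ℝ) (hm : 0 < m) :
    (∫ a in Set.Ioi (0:ℝ),
      Real.exp (-lam * a) * f a (Real.exp (-lam * a) * m) x *
        Real.exp (-(∫ s in (0:ℝ)..a, f s (Real.exp (-lam * s) * m) x)))
      ≤ 1 - (1 - Real.exp (-lam * ε)) * Real.exp (-Mf * ε)
    ∧ 1 - (1 - Real.exp (-lam * ε)) * Real.exp (-Mf * ε) < 1 := by
  constructor
  · have hgmeas : Measurable fun s : ℝ => f s (Real.exp (-lam * s) * m) x := by
      have hc : Measurable fun s : ℝ => (s, (Real.exp (-lam * s) * m, x)) := by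
        fun_prop
      exact hfmeas.comp hc
    exact aux_contraction lam hlam (fun s => f s (Real.exp (-lam * s) * m) x) Mf σ Δ hσ hΔ
      hgmeas (fun s => (hfpos _ _ _).1) (fun s => (hfpos _ _ _).2)
      (fun s hs => hflow _ _ _ hs (by positivity)) ε hε
  · have h1 : Real.exp (-lam * ε) < 1 := by
      rw [Real.exp_lt_one_iff]; nlinarith
    have h2 : 0 < Real.exp (-Mf * ε) := Real.exp_pos _
    nlinarith
end

section
/- Let λ>0, β ∈ (0, σ/λ) where σ := inf f > 0, let f:ℝ₊×ℝ₊*×ℝ→ℝ₊ be measurable with σ ≤ f ≤ ‖f‖_∞. For ũ ∈ L¹₊(ℝ₊*), x̃ ∈ ℝ, it holds that ∫₀^∞ ∫₀^∞ m^{-β} f(a,m,x̃) ũ(e^{λa}m) exp(λa − ∫₀^a f(s, e^{λ(a−s)}m, x̃) ds) da dm ≤ (‖f‖_∞/λ) · (σ/λ − β)^{-1} · ∫₀^∞ ũ(y) y^{-β} dy. -/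
open MeasureTheory
open scoped ENNReal

lemma my_lintegral_scale (g : ℝ → ℝ≥0∞) (hg : Measurable g) {c : ℝ} (hc : 0 < c) :
    ∫⁻ m in Set.Ioi (0:ℝ), g (c * m) = ENNReal.ofReal c⁻¹ * ∫⁻ y in Set.Ioi (0:ℝ), g y := by
  have key : ∀ m : ℝ, Set.indicator (Set.Ioi (0:ℝ)) (fun m => g (c * m)) m
      = Set.indicator (Set.Ioi (0:ℝ)) g (c * m) := by
    intro m
    by_cases hm : m ∈ Set.Ioi (0:ℝ)
    · rw [Set.indicator_of_mem hm, Set.indicator_of_mem (by simpa using mul_pos hc hm)]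
    · rw [Set.indicator_of_notMem hm, Set.indicator_of_notMem]
      simp only [Set.mem_Ioi, not_lt] at hm ⊢
      exact mul_nonpos_of_nonneg_of_nonpos hc.le hm
  calc ∫⁻ m in Set.Ioi (0:ℝ), g (c * m)
      = ∫⁻ m, Set.indicator (Set.Ioi (0:ℝ)) (fun m => g (c * m)) m := by
        rw [lintegral_indicator measurableSet_Ioi]
    _ = ∫⁻ m, Set.indicator (Set.Ioi (0:ℝ)) g (c * m) := by simp_rw [key]
    _ = ∫⁻ y, Set.indicator (Set.Ioi (0:ℝ)) g y ∂(Measure.map (c * ·) volume) := by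
        rw [lintegral_map (hg.indicator measurableSet_Ioi) (measurable_const_mul c)]
    _ = ENNReal.ofReal c⁻¹ * ∫⁻ y in Set.Ioi (0:ℝ), g y := by
        rw [Real.map_volume_mul_left (ne_of_gt hc), lintegral_smul_measure,
          lintegral_indicator measurableSet_Ioi, abs_of_pos (inv_pos.mpr hc), smul_eq_mul]

lemma my_lintegral_exp_neg {b : ℝ} (hb : 0 < b) :
    ∫⁻ a in Set.Ioi (0:ℝ), ENNReal.ofReal (Real.exp (-b * a)) = ENNReal.ofReal b⁻¹ := by
  have hint : IntegrableOn (fun a => Real.exp (-b * a)) (Set.Ioi (0:ℝ)) :=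
    exp_neg_integrableOn_Ioi 0 hb
  rw [← ofReal_integral_eq_lintegral_ofReal hint
    (Filter.Eventually.of_forall fun a => (Real.exp_pos _).le)]
  congr 1
  have : ∫ a in Set.Ioi (0:ℝ), Real.exp (-b * a)
      = 0 - (fun a => -b⁻¹ * Real.exp (-b * a)) 0 := by
    apply integral_Ioi_of_hasDerivAt_of_tendsto
      (f := fun a => -b⁻¹ * Real.exp (-b * a)) (f' := fun a => Real.exp (-b * a)) (m := 0)
    · exact (Continuous.continuousWithinAt (by continuity))
    · intro t ht
      have h1 : HasDerivAt (fun a : ℝ => -b * a) (-b) t := by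
        simpa using (hasDerivAt_id t).const_mul (-b)
      have h2 := (h1.exp).const_mul (-b⁻¹)
      refine h2.congr_deriv ?_
      rw [neg_inv, mul_comm (Real.exp _), ← mul_assoc, inv_mul_cancel₀ (neg_ne_zero.mpr hb.ne'), one_mul]
    · exact hint
    · have hbt : Filter.Tendsto (fun a : ℝ => b * a) Filter.atTop Filter.atTop :=
        Filter.Tendsto.const_mul_atTop hb Filter.tendsto_id
      have := Real.tendsto_exp_neg_atTop_nhds_zero.comp hbt
      have h0 : Filter.Tendsto (fun a : ℝ => Real.exp (-b * a)) Filter.atTop (nhds 0) := by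
        refine this.congr fun a => ?_
        simp [Function.comp, neg_mul]
      simpa using h0.const_mul (-b⁻¹)
  rw [this]
  simp [Real.exp_zero]

/-- Singular-moment estimate for the stationary boundary operator:
∫∫ m^{-β} f ũ(e^{λa}m) exp(λa − ∫₀^a f) da dm
  ≤ (‖f‖_∞/λ)(σ/λ − β)⁻¹ ∫ ũ(y) y^{-β} dy. -/
theorem singular_moment_estimate
    (lam β σ Mf : ℝ) (hlam : 0 < lam) (hσ : 0 < σ) (hβ0 : 0 < β) (hβ : β < σ / lam)
    (f : ℝ → ℝ → ℝ → ℝ)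
    (hfmeas : Measurable fun p : ℝ × ℝ × ℝ => f p.1 p.2.1 p.2.2)
    (hfbd : ∀ a m x, σ ≤ f a m x ∧ f a m x ≤ Mf)
    (u : ℝ → ℝ) (humeas : Measurable u) (hupos : ∀ y, 0 ≤ u y)
    (huint : IntegrableOn u (Set.Ioi (0:ℝ)))
    (huβ : IntegrableOn (fun y => u y * y ^ (-β)) (Set.Ioi (0:ℝ)))
    (x : ℝ) :
    (∫ m in Set.Ioi (0:ℝ), ∫ a in Set.Ioi (0:ℝ),
        m ^ (-β) * f a m x * u (Real.exp (lam * a) * m) *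
          Real.exp (lam * a - ∫ s in (0:ℝ)..a, f s (Real.exp (lam * (a - s)) * m) x))
      ≤ (Mf / lam) * (σ / lam - β)⁻¹ * ∫ y in Set.Ioi (0:ℝ), u y * y ^ (-β) := by
  have hMf : 0 < Mf := lt_of_lt_of_le hσ (le_trans (hfbd 0 0 0).1 (hfbd 0 0 0).2)
  have hb : 0 < σ - lam * β := by nlinarith [(lt_div_iff₀ hlam).mp hβ]
  set Ival : ℝ := ∫ y in Set.Ioi (0:ℝ), u y * y ^ (-β) with hIvaldef
  have hIval0 : 0 ≤ Ival := setIntegral_nonneg measurableSet_Ioi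
    (fun y hy => mul_nonneg (hupos y) (Real.rpow_nonneg (le_of_lt hy) _))
  -- the parametrized interval integral as a globally measurable function
  set S : Set ((ℝ × ℝ) × ℝ) := {q | q.2 ∈ Set.Ioc (0:ℝ) q.1.1} with hSdef
  have hSmeas : MeasurableSet S := by
    have : S = {q : (ℝ × ℝ) × ℝ | (0:ℝ) < q.2} ∩ {q | q.2 ≤ q.1.1} := by
      ext q; simp [hSdef, Set.mem_Ioc, and_comm]
    rw [this]
    exact (measurableSet_lt measurable_const measurable_snd).inter
      (measurableSet_le measurable_snd (measurable_fst.comp measurable_fst))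
  set φ : (ℝ × ℝ) × ℝ → ℝ :=
    S.indicator (fun q => f q.2 (Real.exp (lam * (q.1.1 - q.2)) * q.1.2) x) with hφdef
  have hφmeas : Measurable φ := by
    apply Measurable.indicator _ hSmeas
    exact hfmeas.comp (measurable_snd.prodMk
      (((Real.measurable_exp.comp
        (((measurable_fst.comp measurable_fst).sub measurable_snd).const_mul lam)).mul
        (measurable_snd.comp measurable_fst)).prodMk measurable_const))
  set K : ℝ × ℝ → ℝ := fun p => ∫ s, φ (p, s) with hKdef
  have hKmeas : Measurable K :=
    (hφmeas.stronglyMeasurable.integral_prod_right').measurable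
  -- φ at fixed (a, m) is the indicator of Ioc 0 a
  have hφeq : ∀ (a m s : ℝ), φ ((a, m), s)
      = Set.indicator (Set.Ioc (0:ℝ) a) (fun s => f s (Real.exp (lam * (a - s)) * m) x) s := by
    intro a m s
    simp only [hφdef, Set.indicator_apply, hSdef, Set.mem_setOf_eq]
  -- Fact A : for 0 < a the interval integral equals K (a, m)
  have factA : ∀ (m a : ℝ), 0 < a →
      (∫ s in (0:ℝ)..a, f s (Real.exp (lam * (a - s)) * m) x) = K (a, m) := by
    intro m a ha
    rw [intervalIntegral.integral_of_le ha.le, hKdef]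
    simp only []
    rw [← integral_indicator measurableSet_Ioc]
    exact integral_congr_ae (Filter.Eventually.of_forall fun s => (hφeq a m s).symm)
  -- Fact B : σ * a ≤ K (a, m) for a > 0
  have factB : ∀ (m a : ℝ), 0 < a → σ * a ≤ K (a, m) := by
    intro m a ha
    have hhmeas : Measurable (fun s => f s (Real.exp (lam * (a - s)) * m) x) :=
      hfmeas.comp (measurable_id.prodMk
        (((Real.measurable_exp.comp ((measurable_const.sub measurable_id).const_mul lam)).mul
          measurable_const).prodMk measurable_const))
    have hint : IntegrableOn (fun s => f s (Real.exp (lam * (a - s)) * m) x)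
        (Set.Ioc (0:ℝ) a) := by
      apply Integrable.mono'
        ((integrableOn_const (ne_of_lt measure_Ioc_lt_top)) :
          IntegrableOn (fun _ => Mf) (Set.Ioc (0:ℝ) a) volume)
        hhmeas.aestronglyMeasurable
      refine Filter.Eventually.of_forall fun s => ?_
      rw [Real.norm_eq_abs, abs_le]
      constructor
      · linarith [(hfbd s (Real.exp (lam * (a - s)) * m) x).1, hσ.le, hMf.le]
      · exact (hfbd s (Real.exp (lam * (a - s)) * m) x).2
    have hKval : K (a, m) = ∫ s in Set.Ioc (0:ℝ) a,
        f s (Real.exp (lam * (a - s)) * m) x := by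
      rw [hKdef]
      simp only []
      rw [← integral_indicator measurableSet_Ioc]
      exact integral_congr_ae (Filter.Eventually.of_forall fun s => hφeq a m s)
    have := setIntegral_ge_of_const_le (μ := volume) measurableSet_Ioc
      (ne_of_lt measure_Ioc_lt_top)
      (fun s _ => (hfbd s (Real.exp (lam * (a - s)) * m) x).1) hint
    rw [hKval]
    have hvol : (volume (Set.Ioc (0:ℝ) a)).toReal = a := by
      rw [Real.volume_Ioc, ENNReal.toReal_ofReal (by linarith)]
      ring
    rw [measureReal_def, hvol, smul_eq_mul, mul_comm] at this
    exact this
  -- the measurable version of the integrand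
  set G : ℝ → ℝ → ℝ := fun m a =>
    m ^ (-β) * f a m x * u (Real.exp (lam * a) * m) * Real.exp (lam * a - K (a, m)) with hGdef
  have hGmeas : Measurable (fun p : ℝ × ℝ => G p.1 p.2) := by
    simp only [hGdef]
    have hr : Measurable fun y : ℝ => y ^ (-β) := by fun_prop
    exact (((hr.comp measurable_fst).mul
      (hfmeas.comp (measurable_snd.prodMk (measurable_fst.prodMk measurable_const)))).mul
      (humeas.comp ((Real.measurable_exp.comp (measurable_snd.const_mul lam)).mul
        measurable_fst))).mul
      (Real.measurable_exp.comp ((measurable_snd.const_mul lam).sub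
        (hKmeas.comp (measurable_snd.prodMk measurable_fst))))
  have step1 : (∫ m in Set.Ioi (0:ℝ), ∫ a in Set.Ioi (0:ℝ),
      m ^ (-β) * f a m x * u (Real.exp (lam * a) * m) *
        Real.exp (lam * a - ∫ s in (0:ℝ)..a, f s (Real.exp (lam * (a - s)) * m) x))
      = ∫ m in Set.Ioi (0:ℝ), ∫ a in Set.Ioi (0:ℝ), G m a := by
    refine integral_congr_ae (Filter.Eventually.of_forall fun m => ?_)
    refine setIntegral_congr_fun measurableSet_Ioi fun a ha => ?_
    simp only [hGdef]
    rw [factA m a ha]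
  set J : ℝ≥0∞ := ∫⁻ y in Set.Ioi (0:ℝ), ENNReal.ofReal (u y * y ^ (-β)) with hJdef
  have hJ : J = ENNReal.ofReal Ival := by
    rw [hJdef, hIvaldef, ← ofReal_integral_eq_lintegral_ofReal huβ
      ((ae_restrict_iff' measurableSet_Ioi).mpr (Filter.Eventually.of_forall fun y hy =>
        mul_nonneg (hupos y) (Real.rpow_nonneg hy.le _)))]
  set T : ℝ≥0∞ := ∫⁻ m in Set.Ioi (0:ℝ), ∫⁻ a in Set.Ioi (0:ℝ),
    ENNReal.ofReal (G m a) with hTdef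
  have hGnonneg : ∀ m, 0 < m → ∀ a, 0 ≤ G m a := by
    intro m hm a
    simp only [hGdef]
    have h1 : (0:ℝ) ≤ m ^ (-β) := Real.rpow_nonneg hm.le _
    have h2 := (hfbd a m x).1
    exact mul_nonneg (mul_nonneg (mul_nonneg h1 (by linarith)) (hupos _)) (Real.exp_pos _).le
  have hinnermeas : Measurable fun m => ∫⁻ a in Set.Ioi (0:ℝ), ENNReal.ofReal (G m a) :=
    Measurable.lintegral_prod_right' (f := fun p : ℝ × ℝ => ENNReal.ofReal (G p.1 p.2))
      hGmeas.ennreal_ofReal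
  have step2 : (∫ m in Set.Ioi (0:ℝ), ∫ a in Set.Ioi (0:ℝ), G m a)
      = (∫⁻ m in Set.Ioi (0:ℝ), ENNReal.ofReal
          ((∫⁻ a in Set.Ioi (0:ℝ), ENNReal.ofReal (G m a)).toReal)).toReal := by
    rw [← integral_eq_lintegral_of_nonneg_ae
      (Filter.Eventually.of_forall fun m => ENNReal.toReal_nonneg)
      (hinnermeas.ennreal_toReal).aestronglyMeasurable]
    refine setIntegral_congr_ae measurableSet_Ioi (Filter.Eventually.of_forall fun m hm => ?_)
    rw [integral_eq_lintegral_of_nonneg_ae]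
    · exact (ae_restrict_iff' measurableSet_Ioi).mpr
        (Filter.Eventually.of_forall fun a _ => hGnonneg m hm a)
    · exact (hGmeas.comp (measurable_const.prodMk measurable_id)).aestronglyMeasurable
  have step2' : (∫⁻ m in Set.Ioi (0:ℝ), ENNReal.ofReal
      ((∫⁻ a in Set.Ioi (0:ℝ), ENNReal.ofReal (G m a)).toReal)) ≤ T := by
    rw [hTdef]
    exact lintegral_mono fun m => ENNReal.ofReal_toReal_le
  -- the bounding kernel
  set Bnd : ℝ → ℝ → ℝ≥0∞ := fun m a => ENNReal.ofReal Mf *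
    ENNReal.ofReal (Real.exp ((lam - σ) * a)) *
    ENNReal.ofReal (u (Real.exp (lam * a) * m) * m ^ (-β)) with hBnddef
  have hT2 : T ≤ ∫⁻ m in Set.Ioi (0:ℝ), ∫⁻ a in Set.Ioi (0:ℝ), Bnd m a := by
    rw [hTdef]
    refine lintegral_mono_ae ?_
    filter_upwards [ae_restrict_mem measurableSet_Ioi] with m hm
    refine lintegral_mono_ae ?_
    filter_upwards [ae_restrict_mem measurableSet_Ioi] with a ha
    have hK := factB m a ha
    have hfa := hfbd a m x
    have hrp : (0:ℝ) ≤ m ^ (-β) := Real.rpow_nonneg (le_of_lt hm) _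
    have h1 : G m a ≤ Mf * Real.exp ((lam - σ) * a) *
        (u (Real.exp (lam * a) * m) * m ^ (-β)) := by
      simp only [hGdef]
      have e1 : Real.exp (lam * a - K (a, m)) ≤ Real.exp ((lam - σ) * a) := by
        apply Real.exp_le_exp.mpr
        nlinarith
      have s1 : m ^ (-β) * f a m x ≤ m ^ (-β) * Mf :=
        mul_le_mul_of_nonneg_left hfa.2 hrp
      have s2 : m ^ (-β) * f a m x * u (Real.exp (lam * a) * m)
          ≤ m ^ (-β) * Mf * u (Real.exp (lam * a) * m) :=
        mul_le_mul_of_nonneg_right s1 (hupos _)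
      have s3 : m ^ (-β) * f a m x * u (Real.exp (lam * a) * m) *
            Real.exp (lam * a - K (a, m))
          ≤ m ^ (-β) * Mf * u (Real.exp (lam * a) * m) * Real.exp (lam * a - K (a, m)) :=
        mul_le_mul_of_nonneg_right s2 (Real.exp_pos _).le
      have s4 : m ^ (-β) * Mf * u (Real.exp (lam * a) * m) * Real.exp (lam * a - K (a, m))
          ≤ m ^ (-β) * Mf * u (Real.exp (lam * a) * m) * Real.exp ((lam - σ) * a) :=
        mul_le_mul_of_nonneg_left e1
          (mul_nonneg (mul_nonneg hrp hMf.le) (hupos _))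
      calc m ^ (-β) * f a m x * u (Real.exp (lam * a) * m) * Real.exp (lam * a - K (a, m))
          ≤ m ^ (-β) * Mf * u (Real.exp (lam * a) * m) * Real.exp ((lam - σ) * a) :=
            le_trans s3 s4
        _ = Mf * Real.exp ((lam - σ) * a) * (u (Real.exp (lam * a) * m) * m ^ (-β)) := by
            ring
    calc ENNReal.ofReal (G m a)
        ≤ ENNReal.ofReal (Mf * Real.exp ((lam - σ) * a) *
            (u (Real.exp (lam * a) * m) * m ^ (-β))) := ENNReal.ofReal_le_ofReal h1
      _ = Bnd m a := by
          rw [hBnddef]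
          rw [ENNReal.ofReal_mul (mul_nonneg hMf.le (Real.exp_pos _).le),
            ENNReal.ofReal_mul hMf.le]
  have hrpm : Measurable fun y : ℝ => y ^ (-β) := by fun_prop
  have hg2meas : Measurable fun y : ℝ => ENNReal.ofReal (u y * y ^ (-β)) :=
    (humeas.mul hrpm).ennreal_ofReal
  have hBndmeas : Measurable (fun p : ℝ × ℝ => Bnd p.1 p.2) := by
    simp only [hBnddef]
    exact (measurable_const.mul ((Real.measurable_exp.comp
      (measurable_snd.const_mul (lam - σ))).ennreal_ofReal)).mul
      ((humeas.comp ((Real.measurable_exp.comp (measurable_snd.const_mul lam)).mul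
        measurable_fst)).mul (hrpm.comp measurable_fst)).ennreal_ofReal
  have hswap : (∫⁻ m in Set.Ioi (0:ℝ), ∫⁻ a in Set.Ioi (0:ℝ), Bnd m a)
      = ∫⁻ a in Set.Ioi (0:ℝ), ∫⁻ m in Set.Ioi (0:ℝ), Bnd m a :=
    lintegral_lintegral_swap hBndmeas.aemeasurable
  have inner_eq : ∀ a : ℝ,
      (∫⁻ m in Set.Ioi (0:ℝ), ENNReal.ofReal (u (Real.exp (lam * a) * m) * m ^ (-β)))
      = ENNReal.ofReal (Real.exp (lam * a * β) * Real.exp (-(lam * a))) * J := by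
    intro a
    set c := Real.exp (lam * a) with hcdef
    have hc : 0 < c := Real.exp_pos _
    have e1 : ∀ m ∈ Set.Ioi (0:ℝ), ENNReal.ofReal (u (c * m) * m ^ (-β))
        = ENNReal.ofReal (c ^ β) * ENNReal.ofReal (u (c * m) * (c * m) ^ (-β)) := by
      intro m hm
      rw [← ENNReal.ofReal_mul (Real.rpow_nonneg hc.le _)]
      congr 1
      rw [Real.mul_rpow hc.le (le_of_lt hm)]
      have e2 : c ^ β * (u (c * m) * (c ^ (-β) * m ^ (-β)))
          = (c ^ β * c ^ (-β)) * (u (c * m) * m ^ (-β)) := by ring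
      rw [e2, ← Real.rpow_add hc, add_neg_cancel, Real.rpow_zero, one_mul]
    calc ∫⁻ m in Set.Ioi (0:ℝ), ENNReal.ofReal (u (c * m) * m ^ (-β))
        = ∫⁻ m in Set.Ioi (0:ℝ),
            ENNReal.ofReal (c ^ β) * ENNReal.ofReal (u (c * m) * (c * m) ^ (-β)) :=
          setLIntegral_congr_fun measurableSet_Ioi e1
      _ = ENNReal.ofReal (c ^ β) *
            ∫⁻ m in Set.Ioi (0:ℝ), ENNReal.ofReal (u (c * m) * (c * m) ^ (-β)) :=
          lintegral_const_mul _ (hg2meas.comp (measurable_const_mul c))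
      _ = ENNReal.ofReal (c ^ β) * (ENNReal.ofReal c⁻¹ * J) := by
          rw [my_lintegral_scale _ hg2meas hc, hJdef]
      _ = ENNReal.ofReal (Real.exp (lam * a * β) * Real.exp (-(lam * a))) * J := by
          rw [← mul_assoc, ← ENNReal.ofReal_mul (Real.rpow_nonneg hc.le _), hcdef,
            ← Real.exp_mul, ← Real.exp_neg]
  have step6 : (∫⁻ a in Set.Ioi (0:ℝ), ∫⁻ m in Set.Ioi (0:ℝ), Bnd m a)
      = ENNReal.ofReal (σ - lam * β)⁻¹ * (ENNReal.ofReal Mf * J) := by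
    have e : ∀ a ∈ Set.Ioi (0:ℝ), (∫⁻ m in Set.Ioi (0:ℝ), Bnd m a)
        = ENNReal.ofReal (Real.exp (-(σ - lam * β) * a)) * (ENNReal.ofReal Mf * J) := by
      intro a _
      calc ∫⁻ m in Set.Ioi (0:ℝ), Bnd m a
          = ENNReal.ofReal Mf * ENNReal.ofReal (Real.exp ((lam - σ) * a)) *
            ∫⁻ m in Set.Ioi (0:ℝ),
              ENNReal.ofReal (u (Real.exp (lam * a) * m) * m ^ (-β)) := by
            have hw : Measurable fun m : ℝ =>
                ENNReal.ofReal (u (Real.exp (lam * a) * m) * m ^ (-β)) :=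
              ((humeas.comp (measurable_const_mul (Real.exp (lam * a)))).mul
                hrpm).ennreal_ofReal
            simp only [hBnddef]
            exact lintegral_const_mul _ hw
        _ = ENNReal.ofReal Mf * ENNReal.ofReal (Real.exp ((lam - σ) * a)) *
            (ENNReal.ofReal (Real.exp (lam * a * β) * Real.exp (-(lam * a))) * J) := by
            rw [inner_eq a]
        _ = (ENNReal.ofReal (Real.exp ((lam - σ) * a)) *
              ENNReal.ofReal (Real.exp (lam * a * β) * Real.exp (-(lam * a)))) *
            (ENNReal.ofReal Mf * J) := by ring
        _ = ENNReal.ofReal (Real.exp (-(σ - lam * β) * a)) * (ENNReal.ofReal Mf * J) := by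
            rw [← ENNReal.ofReal_mul (Real.exp_pos _).le, ← Real.exp_add, ← Real.exp_add]
            ring_nf
    have hexpmeas : Measurable fun a : ℝ =>
        ENNReal.ofReal (Real.exp (-(σ - lam * β) * a)) :=
      (Real.measurable_exp.comp (measurable_id.const_mul (-(σ - lam * β)))).ennreal_ofReal
    rw [setLIntegral_congr_fun measurableSet_Ioi e,
      lintegral_mul_const _ hexpmeas, my_lintegral_exp_neg hb]
  have final : T ≤ ENNReal.ofReal ((σ - lam * β)⁻¹ * Mf * Ival) := by
    calc T ≤ ∫⁻ m in Set.Ioi (0:ℝ), ∫⁻ a in Set.Ioi (0:ℝ), Bnd m a := hT2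
      _ = ENNReal.ofReal (σ - lam * β)⁻¹ * (ENNReal.ofReal Mf * J) := by rw [hswap, step6]
      _ = ENNReal.ofReal ((σ - lam * β)⁻¹ * Mf * Ival) := by
          rw [hJ, ← ENNReal.ofReal_mul hMf.le, ← ENNReal.ofReal_mul (inv_nonneg.mpr hb.le),
            mul_assoc]
  rw [step1, step2]
  have hle := ENNReal.toReal_mono (by simp) (le_trans step2' final)
  rw [ENNReal.toReal_ofReal (by positivity)] at hle
  refine le_trans hle (le_of_eq ?_)
  have hne3 : σ / lam - β ≠ 0 := (sub_pos.mpr hβ).ne'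
  have h1 : (σ - lam * β)⁻¹ * Mf = Mf / lam * (σ / lam - β)⁻¹ := by
    field_simp
  rw [← h1]
end
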